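/- The x-coordinate of [4]Q for Q = (-T, T^2) on y^2 = x^3 + T x^2 - T^3 x over F_p(T) (p odd) is non-integral at the place T + 1, i.e., has negative valuation at T = -1. -/

import Mathlib

/-- The `x`-coordinate of `[4]Q` for `Q = (-T, T²)` on `y² = x³ + T x² - T³ x` over
`𝔽_p(T)` (`p` odd) is non-integral at the place `T + 1`, i.e. it has negative additive
valuation at `T = -1`.  In Mathlib's multiplicative normalization of the `(T+1)`-adic
valuation (where a uniformizer has valuation `ofAdd (-1) < 1` and integral elements have
valuation `≤ 1`), this says that the valuation of `x([4]Q)` is `> 1`. -/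
theorem x4Q_not_integral_at_Tplus1 (p : ℕ) [Fact p.Prime] (hp : p ≠ 2)
    (v : IsDedekindDomain.HeightOneSpectrum (Polynomial (ZMod p)))
    (hv : v.asIdeal = Ideal.span {Polynomial.X + 1}) :
    1 < (v.valuation (RatFunc (ZMod p)) :
        Valuation (RatFunc (ZMod p)) (WithZero (Multiplicative ℤ)))
      ((((RatFunc.X + 1) ^ 4 + 16 * RatFunc.X ^ 3) /
        (4 * (RatFunc.X + 1) * (RatFunc.X ^ 2 - 4 * RatFunc.X - 1))) ^ 2) := by
  have hprime := Fact.out (p := p.Prime)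
  have h2 : (2 : ZMod p) ≠ 0 := by
    intro h
    have : (p : ℕ) ∣ 2 := by
      have := (ZMod.natCast_eq_zero_iff 2 p).mp (by exact_mod_cast h)
      exact this
    exact hp ((Nat.prime_dvd_prime_iff_eq hprime Nat.prime_two).mp this)
  have hXne : (Polynomial.X + 1 : Polynomial (ZMod p)) ≠ 0 := by
    intro h
    have h1 : ((Polynomial.X + 1 : Polynomial (ZMod p))).natDegree = 1 := by
      simpa using Polynomial.natDegree_X_add_C (1 : ZMod p)
    rw [h] at h1
    simp at h1
  have hπ : v.intValuation (Polynomial.X + 1) = Multiplicative.ofAdd (-1 : ℤ) :=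
    v.intValuation_singleton hXne hv
  have hXeq : (Polynomial.X + 1 : Polynomial (ZMod p)) = Polynomial.X - Polynomial.C (-1) := by
    simp
  have h4' : (4 : ZMod p) ≠ 0 := by
    have e : (4 : ZMod p) = 2 ^ 2 := by norm_num
    rw [e]; exact pow_ne_zero _ h2
  have h16 : (16 : ZMod p) ≠ 0 := by
    have e : (16 : ZMod p) = 2 ^ 4 := by norm_num
    rw [e]; exact pow_ne_zero _ h2
  have key : ∀ r : Polynomial (ZMod p), Polynomial.eval (-1) r ≠ 0 → v.intValuation r = 1 := by
    intro r hr
    rcases lt_or_eq_of_le (v.intValuation_le_one r) with h | h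
    · exfalso
      rw [IsDedekindDomain.HeightOneSpectrum.intValuation_lt_one_iff_dvd, hv,
        span_singleton_dvd_span_singleton_iff_dvd, hXeq, Polynomial.dvd_iff_isRoot] at h
      exact hr h
    · exact h
  have hN : v.intValuation ((Polynomial.X + 1) ^ 4 + 16 * Polynomial.X ^ 3) = 1 := by
    apply key
    simp only [Polynomial.eval_add, Polynomial.eval_pow, Polynomial.eval_mul,
      Polynomial.eval_ofNat, Polynomial.eval_X, Polynomial.eval_one]
    norm_num
    assumption
  have hQ : v.intValuation (Polynomial.X ^ 2 - 4 * Polynomial.X - 1) = 1 := by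
    apply key
    simp only [Polynomial.eval_sub, Polynomial.eval_pow, Polynomial.eval_mul,
      Polynomial.eval_ofNat, Polynomial.eval_X, Polynomial.eval_one]
    norm_num
    assumption
  have h4 : v.intValuation (4 : Polynomial (ZMod p)) = 1 := by
    apply key
    simp only [Polynomial.eval_ofNat]
    exact h4'
  have eqN : ((RatFunc.X + 1) ^ 4 + 16 * RatFunc.X ^ 3 : RatFunc (ZMod p)) =
      algebraMap (Polynomial (ZMod p)) _ ((Polynomial.X + 1) ^ 4 + 16 * Polynomial.X ^ 3) := by
    simp [map_add, map_pow, map_mul, map_ofNat, RatFunc.algebraMap_X]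
  have eqD : (4 * (RatFunc.X + 1) * (RatFunc.X ^ 2 - 4 * RatFunc.X - 1) : RatFunc (ZMod p)) =
      algebraMap (Polynomial (ZMod p)) _
        (4 * (Polynomial.X + 1) * (Polynomial.X ^ 2 - 4 * Polynomial.X - 1)) := by
    simp [map_add, map_sub, map_pow, map_mul, map_ofNat, RatFunc.algebraMap_X]
  rw [map_pow, map_div₀, eqN, eqD,
    IsDedekindDomain.HeightOneSpectrum.valuation_of_algebraMap,
    IsDedekindDomain.HeightOneSpectrum.valuation_of_algebraMap,
    map_mul, map_mul, hN, hQ, h4, hπ]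
  norm_num
  decide
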